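/- If X : ℝ → Matrix is a solution of the matrix ODE X'(t) = G(t) * X(t) with G being T-periodic (G(t+T) = G(t) for all t), and X(T) is invertible, then Y(t) := X(t+T) * (X(T))⁻¹ * X(0) also solves Y'(t) = G(t) * Y(t) with Y(0) = X(0); hence by uniqueness of solutions of linear ODEs, X(t+T) * (X(T))⁻¹ * X(0) = X(t) for all t. -/

import Mathlib

open Set

/-- Uniqueness for the linear matrix ODE `f' = G f` (entrywise derivatives). -/
theorem ode_unique_aux {n : ℕ} (G : ℝ → Matrix (Fin n) (Fin n) ℝ)
    (hGcont : ∀ i j, Continuous fun t => G t i j)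
    (f g : ℝ → Matrix (Fin n) (Fin n) ℝ)
    (hf : ∀ t (i j : Fin n), HasDerivAt (fun s => f s i j) ((G t * f t) i j) t)
    (hg : ∀ t (i j : Fin n), HasDerivAt (fun s => g s i j) ((G t * g t) i j) t)
    (h0 : f 0 = g 0) : ∀ t, f t = g t := by
  intro t₁
  set b : ℝ := |t₁| + 1 with hb
  have hb0 : 0 < b := by positivity
  set a : ℝ := -b with ha
  have ha0 : a < 0 := by simp [ha, hb0]
  -- the clamped time
  set proj : ℝ → ℝ := fun t => max a (min t b) with hproj
  have hproj_mem : ∀ t, proj t ∈ Icc a b := by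
    intro t
    refine ⟨le_max_left _ _, max_le ?_ (min_le_right _ _)⟩
    linarith
  have hproj_eq : ∀ t ∈ Icc a b, proj t = t := by
    intro t ht
    simp only [hproj]
    rw [min_eq_left ht.2, max_eq_right ht.1]
  -- continuity of G as a pi-valued map
  have hGn : Continuous (fun t => (fun i j => G t i j : Fin n → Fin n → ℝ)) :=
    continuous_pi fun i => continuous_pi fun j => hGcont i j
  -- bound for G on the compact interval
  obtain ⟨C, hC⟩ : ∃ C, ∀ t ∈ Icc a b, ‖(fun i j => G t i j : Fin n → Fin n → ℝ)‖ ≤ C := by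
    exact isCompact_Icc.exists_bound_of_continuousOn hGn.continuousOn
  have hC0 : 0 ≤ C := le_trans (norm_nonneg _) (hC a ⟨le_rfl, le_of_lt (by linarith)⟩)
  have hentry : ∀ t (i j : Fin n), |G (proj t) i j| ≤ C := by
    intro t i j
    calc |G (proj t) i j| = ‖(fun i j => G (proj t) i j : Fin n → Fin n → ℝ) i j‖ := rfl
      _ ≤ ‖(fun j => G (proj t) i j : Fin n → ℝ)‖ := norm_le_pi_norm (fun j => G (proj t) i j) j
      _ ≤ ‖(fun i j => G (proj t) i j : Fin n → Fin n → ℝ)‖ := norm_le_pi_norm (fun i j => G (proj t) i j) i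
      _ ≤ C := hC _ (hproj_mem t)
  -- the (globally Lipschitz) clamped vector field
  set v : ℝ → (Fin n → Fin n → ℝ) → (Fin n → Fin n → ℝ) :=
    fun t M i j => ∑ k, G (proj t) i k * M k j with hv
  have hK : ∀ t, LipschitzWith (Real.toNNReal (n * C)) (v t) := by
    intro t
    rw [lipschitzWith_iff_dist_le_mul]
    intro M M'
    rw [dist_eq_norm, dist_eq_norm]
    have hnC : (0:ℝ) ≤ n * C := by positivity
    rw [Real.coe_toNNReal _ hnC]
    have hrhs : (0:ℝ) ≤ n * C * ‖M - M'‖ := by positivity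
    refine (pi_norm_le_iff_of_nonneg hrhs).mpr fun i => ?_
    refine (pi_norm_le_iff_of_nonneg hrhs).mpr fun j => ?_
    have : (v t M - v t M') i j = ∑ k, G (proj t) i k * (M k j - M' k j) := by
      simp [hv, mul_sub, Finset.sum_sub_distrib]
    rw [Real.norm_eq_abs, this]
    calc |∑ k, G (proj t) i k * (M k j - M' k j)|
        ≤ ∑ k, |G (proj t) i k * (M k j - M' k j)| := Finset.abs_sum_le_sum_abs _ _
      _ ≤ ∑ _k : Fin n, C * ‖M - M'‖ := by
          refine Finset.sum_le_sum fun k _ => ?_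
          rw [abs_mul]
          refine mul_le_mul (hentry t i k) ?_ (abs_nonneg _) hC0
          calc |M k j - M' k j| = ‖(M - M') k j‖ := by simp [Real.norm_eq_abs]
            _ ≤ ‖(M - M') k‖ := norm_le_pi_norm _ j
            _ ≤ ‖M - M'‖ := norm_le_pi_norm _ k
      _ = n * C * ‖M - M'‖ := by simp [Finset.sum_const, mul_assoc]
  -- solutions as pi-valued maps
  set F : ℝ → (Fin n → Fin n → ℝ) := fun t i j => f t i j with hF
  set Gg : ℝ → (Fin n → Fin n → ℝ) := fun t i j => g t i j with hGg
  have hFd : ∀ t ∈ Ioo a b, HasDerivAt F (v t (F t)) t := by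
    intro t ht
    rw [hasDerivAt_pi]
    intro i
    rw [hasDerivAt_pi]
    intro j
    have : v t (F t) i j = (G t * f t) i j := by
      simp [hv, hF, hproj_eq t (Ioo_subset_Icc_self ht), Matrix.mul_apply]
    rw [this]
    exact hf t i j
  have hGd : ∀ t ∈ Ioo a b, HasDerivAt Gg (v t (Gg t)) t := by
    intro t ht
    rw [hasDerivAt_pi]
    intro i
    rw [hasDerivAt_pi]
    intro j
    have : v t (Gg t) i j = (G t * g t) i j := by
      simp [hv, hGg, hproj_eq t (Ioo_subset_Icc_self ht), Matrix.mul_apply]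
    rw [this]
    exact hg t i j
  have hFc : Continuous F := continuous_pi fun i => continuous_pi fun j =>
    continuous_iff_continuousAt.mpr fun t => (hf t i j).continuousAt
  have hGc : Continuous Gg := continuous_pi fun i => continuous_pi fun j =>
    continuous_iff_continuousAt.mpr fun t => (hg t i j).continuousAt
  have key : EqOn F Gg (Icc a b) := by
    refine ODE_solution_unique_of_mem_Icc
      (v := v) (s := fun _ => Set.univ) (K := Real.toNNReal (n * C))
      (fun t _ => (hK t).lipschitzOnWith)
      (t₀ := 0) ⟨ha0, hb0⟩ hFc.continuousOn hFd (fun _ _ => trivial)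
      hGc.continuousOn hGd (fun _ _ => trivial) ?_
    funext i j
    simp [hF, hGg, h0]
  have ht₁ : t₁ ∈ Icc a b := by
    constructor
    · rw [ha, hb]; have := neg_abs_le t₁; linarith
    · rw [hb]; have := le_abs_self t₁; linarith
  have := key ht₁
  ext i j
  exact congrFun (congrFun this i) j

/-- If `X` solves the matrix ODE `X' = G X` with `G` `T`-periodic and `X T` invertible,
then `Y t := X (t+T) * (X T)⁻¹ * X 0` also solves `Y' = G Y` with `Y 0 = X 0`; hence by
uniqueness of solutions of linear ODEs, `X (t+T) * (X T)⁻¹ * X 0 = X t` for all `t`. -/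
theorem stmt_0 {n : ℕ} (T : ℝ) (hT : 0 < T)
    (G X : ℝ → Matrix (Fin n) (Fin n) ℝ)
    (hGcont : ∀ i j, Continuous fun t => G t i j)
    (hGper : ∀ t, G (t + T) = G t)
    (hX : ∀ t (i j : Fin n), HasDerivAt (fun s => X s i j) ((G t * X t) i j) t)
    (hXT : IsUnit (X T)) (hX0 : IsUnit (X 0)) :
    (∀ t (i j : Fin n),
        HasDerivAt (fun s => (X (s + T) * (X T)⁻¹ * X 0) i j)
          ((G t * (X (t + T) * (X T)⁻¹ * X 0)) i j) t) ∧
    (X (0 + T) * (X T)⁻¹ * X 0 = X 0) ∧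
    (∀ t, X (t + T) * (X T)⁻¹ * X 0 = X t) := by
  have hXTdet : IsUnit (X T).det := (Matrix.isUnit_iff_isUnit_det _).mp hXT
  have hinit : X (0 + T) * (X T)⁻¹ * X 0 = X 0 := by
    rw [zero_add, Matrix.mul_nonsing_inv _ hXTdet, one_mul]
  set D : Matrix (Fin n) (Fin n) ℝ := (X T)⁻¹ * X 0 with hD
  have hder : ∀ t (i j : Fin n),
      HasDerivAt (fun s => (X (s + T) * (X T)⁻¹ * X 0) i j)
        ((G t * (X (t + T) * (X T)⁻¹ * X 0)) i j) t := by
    intro t i j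
    have h1 : ∀ k : Fin n, HasDerivAt (fun s => X (s + T) i k)
        ((G (t + T) * X (t + T)) i k) t := by
      intro k
      have := (hX (t + T) i k).comp t ((hasDerivAt_id t).add_const T)
      simpa [Function.comp_def] using this
    have h2 : HasDerivAt (fun s => ∑ k, X (s + T) i k * D k j)
        (∑ k, (G (t + T) * X (t + T)) i k * D k j) t :=
      HasDerivAt.fun_sum fun k _ => (h1 k).mul_const _
    have hfun : (fun s => (X (s + T) * (X T)⁻¹ * X 0) i j)
        = fun s => ∑ k, X (s + T) i k * D k j := by
      funext s
      rw [mul_assoc, ← hD, Matrix.mul_apply]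
    have hval : (∑ k, (G (t + T) * X (t + T)) i k * D k j)
        = (G t * (X (t + T) * (X T)⁻¹ * X 0)) i j := by
      rw [← Matrix.mul_apply, hGper]
      simp [hD, mul_assoc]
    rw [hfun, ← hval]
    exact h2
  refine ⟨hder, hinit, ?_⟩
  exact ode_unique_aux G hGcont _ X hder hX hinit
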